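/- With $\mathfrak{g}$, $\mathfrak{t}$, $F$ as above, if $V \in \mathfrak{g}$ satisfies $e^{s\,\mathrm{ad}_{Fy}}V = s\,[y, FV]$ for some $y \in \mathfrak{g}$ and $s \in \mathbb{R}$, then $V = 0$. -/

import Mathlib

set_option maxHeartbeats 1000000

open scoped RealInnerProductSpace

/-- With `𝔤`, `𝔱`, `F` as before, if `V` satisfies
`e^{s ad_{Fy}} V = s • [y, F V]` for some `y` and `s`, then `V = 0`. -/
theorem eq_zero_of_exp_eq_s_bracket
    {g : Type*} [NormedAddCommGroup g] [InnerProductSpace ℝ g] [FiniteDimensional ℝ g]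
    (l : g →ₗ[ℝ] g →ₗ[ℝ] g)
    (hlalt : ∀ X : g, l X X = 0)
    (hljac : ∀ X Y Z : g, l X (l Y Z) = l (l X Y) Z + l Y (l X Z))
    (hinv : ∀ X Y Z : g, ⟪l X Y, Z⟫ + ⟪Y, l X Z⟫ = 0)
    (t : Submodule ℝ g)
    (htsub : ∀ A ∈ t, ∀ B ∈ t, l A B ∈ t)
    (habelian : ∀ A ∈ t, ∀ B ∈ t, l A B = 0)
    (F : g →ₗ[ℝ] g)
    (hFsa : ∀ v w : g, ⟪F v, w⟫ = ⟪v, F w⟫)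
    (hFim : ∀ v : g, F v ∈ t)
    (hFperp : ∀ v ∈ tᗮ, F v = 0)
    (y : g) (s : ℝ) (V : g)
    (hV : NormedSpace.exp (s • LinearMap.toContinuousLinearMap (l (F y))) V
        = s • l y (F V)) :
    V = 0 := by
  classical
  set M : g →L[ℝ] g := s • LinearMap.toContinuousLinearMap (l (F y)) with hMdef
  -- antisymmetry
  have hanti : ∀ X Y : g, l X Y = - l Y X := by
    intro X Y
    have h := hlalt (X + Y)
    simp only [map_add, LinearMap.add_apply, hlalt, zero_add, add_zero] at h
    exact eq_neg_of_add_eq_zero_right h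
  -- cyclic invariance
  have hcyc : ∀ X Y Z : g, ⟪l X Y, Z⟫ = ⟪X, l Y Z⟫ := by
    intro X Y Z
    have h1 := hinv X Y Z
    have h2 := hinv Z Y X
    rw [hanti X Z] at h1
    rw [hanti Z Y] at h2
    simp only [inner_neg_left, inner_neg_right] at h1 h2
    have h3 := real_inner_comm X (l Y Z)
    have h4 := real_inner_comm Y (l Z X)
    linarith
  -- M maps into tᗮ
  have hMperp : ∀ w : g, M w ∈ tᗮ := by
    intro w
    rw [Submodule.mem_orthogonal]
    intro u hu
    have h0 : l (F y) u = 0 := habelian (F y) (hFim y) u hu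
    have h1 := hinv (F y) w u
    rw [h0, inner_zero_right, add_zero] at h1
    have : M w = s • l (F y) w := by
      simp [hMdef]
    rw [this, real_inner_comm, real_inner_smul_left, h1, mul_zero]
  -- exp M V decomposition
  have hsum : Summable fun n : ℕ => ((n.factorial : ℝ))⁻¹ • M ^ n :=
    NormedSpace.expSeries_summable' M
  have happ : NormedSpace.exp M V = ∑' n : ℕ, ((n.factorial : ℝ))⁻¹ • (M ^ n) V := by
    rw [NormedSpace.exp_eq_tsum ℝ]
    have := (ContinuousLinearMap.apply ℝ g V).map_tsum hsum
    simpa using this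
  have hsum' : Summable fun n : ℕ => ((n.factorial : ℝ))⁻¹ • (M ^ n) V := by
    have := hsum.map (ContinuousLinearMap.apply ℝ g V).toLinearMap.toAddMonoidHom
      (ContinuousLinearMap.apply ℝ g V).continuous
    exact this
  have hshift : NormedSpace.exp M V
      = V + ∑' n : ℕ, (((n+1).factorial : ℝ))⁻¹ • (M ^ (n + 1)) V := by
    rw [happ, Summable.tsum_eq_zero_add hsum']
    simp
  have hsum'' : Summable fun n : ℕ => (((n+1).factorial : ℝ))⁻¹ • (M ^ (n + 1)) V :=
    (summable_nat_add_iff 1).2 hsum'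
  have hmem : (∑' n : ℕ, (((n+1).factorial : ℝ))⁻¹ • (M ^ (n + 1)) V) ∈ tᗮ := by
    have hcl : IsClosed (tᗮ : Set g) := Submodule.closed_of_finiteDimensional _
    refine hcl.mem_of_tendsto hsum''.hasSum.tendsto_sum_nat
      (Filter.Eventually.of_forall fun n => ?_)
    refine Submodule.sum_mem _ fun i _ => Submodule.smul_mem _ _ ?_
    have : (M ^ (i + 1)) V = M ((M ^ i) V) := by
      rw [pow_succ', ContinuousLinearMap.mul_apply]
    rw [this]
    exact hMperp _
  -- F V = 0
  have hFFV : F (F V) ∈ t := hFim _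
  have key : ⟪F V, F V⟫ = 0 := by
    have e1 : ⟪NormedSpace.exp M V, F (F V)⟫ = ⟪V, F (F V)⟫ := by
      rw [hshift, inner_add_left]
      have := (Submodule.mem_orthogonal _ _).1 hmem (F (F V)) hFFV
      rw [real_inner_comm] at this
      rw [this, add_zero]
    have e2 : ⟪NormedSpace.exp M V, F (F V)⟫ = 0 := by
      rw [hV, real_inner_smul_left, hcyc, habelian (F V) (hFim V) (F (F V)) hFFV,
        inner_zero_right, mul_zero]
    have e3 : ⟪V, F (F V)⟫ = ⟪F V, F V⟫ := by
      rw [← hFsa, real_inner_comm]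
    rw [e1, e3] at e2
    exact e2
  have hFV : F V = 0 := by
    rwa [inner_self_eq_zero] at key
  -- conclude
  rw [hFV, map_zero, smul_zero] at hV
  have h1 : NormedSpace.exp (-M) * NormedSpace.exp M = 1 := by
    rw [← NormedSpace.exp_add_of_commute_of_mem_ball (𝕂 := ℝ) (Commute.refl M).neg_left
      ((NormedSpace.expSeries_radius_eq_top ℝ (g →L[ℝ] g)).symm ▸ edist_lt_top _ _)
      ((NormedSpace.expSeries_radius_eq_top ℝ (g →L[ℝ] g)).symm ▸ edist_lt_top _ _), neg_add_cancel,
      NormedSpace.exp_zero]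
  calc V = (1 : g →L[ℝ] g) V := (ContinuousLinearMap.one_apply V).symm
    _ = (NormedSpace.exp (-M) * NormedSpace.exp M) V := by rw [h1]
    _ = NormedSpace.exp (-M) (NormedSpace.exp M V) := ContinuousLinearMap.mul_apply _ _ _
    _ = 0 := by rw [hV, map_zero]
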